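/- The standard coordinate at a zero is unique up to multiplication by a k-th root of unity: let k ≥ 1, ρ > 0, and let f be holomorphic on Δ_ρ with a zero of order exactly k−1 at 0. If φ₁ and φ₂ are injective holomorphic maps on a disk Δ_{ρ′} into Δ_ρ with φ₁(0) = φ₂(0) = 0 and f(φ_i(z))·φ_i′(z) = k·z^{k−1} on Δ_{ρ′} for i = 1, 2, then there exist ρ″ > 0 and ζ ∈ ℂ with ζ^k = 1 such that φ₂(z) = φ₁(ζ·z) for all z ∈ Δ_{ρ″}. -/

import Mathlib

open Metric Set Filter

/-- `f` has a zero of order exactly `m` at `0`: `f z = z ^ m * g z` near `0`,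
with `g` holomorphic near `0` and `g 0 ≠ 0`. -/
def HasZeroOfExactOrderAtZero (f : ℂ → ℂ) (m : ℕ) : Prop :=
  ∃ g : ℂ → ℂ, AnalyticAt ℂ g 0 ∧ g 0 ≠ 0 ∧ ∀ᶠ z in nhds (0 : ℂ), f z = z ^ m * g z

/-- A standard coordinate for `f dz` at a zero of order `k - 1`: an injective holomorphic map
`φ : Δ_ρ' → Δ_ρ` with `φ 0 = 0` such that `f (φ z) * φ' z = k * z^(k-1)` on `Δ_ρ'`. -/
def IsStandardCoordAtZero (k : ℕ) (ρ ρ' : ℝ) (f φ : ℂ → ℂ) : Prop :=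
  AnalyticOnNhd ℂ φ (ball (0 : ℂ) ρ') ∧
  InjOn φ (ball (0 : ℂ) ρ') ∧
  MapsTo φ (ball (0 : ℂ) ρ') (ball (0 : ℂ) ρ) ∧
  φ 0 = 0 ∧
  ∀ z ∈ ball (0 : ℂ) ρ', f (φ z) * deriv φ z = (k : ℂ) * z ^ (k - 1)

/-- The standard coordinate at a zero is unique up to multiplication by a `k`-th root of
unity: any two standard coordinates `φ₁, φ₂` satisfy `φ₂ z = φ₁ (ζ z)` near `0` for some
`ζ` with `ζ ^ k = 1`. -/
theorem standard_coordinate_at_zero_unique (k : ℕ) (hk : 1 ≤ k)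
    (ρ ρ' : ℝ) (hρ : 0 < ρ) (hρ' : 0 < ρ')
    (f : ℂ → ℂ) (hf : AnalyticOnNhd ℂ f (ball (0 : ℂ) ρ))
    (h0 : HasZeroOfExactOrderAtZero f (k - 1))
    (φ₁ φ₂ : ℂ → ℂ)
    (hφ₁ : IsStandardCoordAtZero k ρ ρ' f φ₁)
    (hφ₂ : IsStandardCoordAtZero k ρ ρ' f φ₂) :
    ∃ ρ'' > (0 : ℝ), ∃ ζ : ℂ, ζ ^ k = 1 ∧
      ∀ z ∈ ball (0 : ℂ) ρ'', φ₂ z = φ₁ (ζ * z) := by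
  obtain ⟨hφ₁a, hφ₁inj, hφ₁maps, hφ₁0, hφ₁eq⟩ := hφ₁
  obtain ⟨hφ₂a, hφ₂inj, hφ₂maps, hφ₂0, hφ₂eq⟩ := hφ₂
  obtain ⟨g, hg, hg0, hfg⟩ := h0
  have hkC : (k : ℂ) ≠ 0 := Nat.cast_ne_zero.2 (by omega)
  have h0ball : (0 : ℂ) ∈ ball (0 : ℂ) ρ' := mem_ball_self hρ'
  have hball_nhds : ball (0 : ℂ) ρ' ∈ nhds (0 : ℂ) := isOpen_ball.mem_nhds h0ball
  have hA₁ : AnalyticAt ℂ φ₁ 0 := hφ₁a 0 h0ball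
  have hA₂ : AnalyticAt ℂ φ₂ 0 := hφ₂a 0 h0ball
  have hd₁ : DifferentiableAt ℂ φ₁ 0 := hA₁.differentiableAt
  have hc₂ : ContinuousAt φ₂ 0 := hA₂.continuousAt
  have hc₁ : ContinuousAt φ₁ 0 := hA₁.continuousAt
  have htend₁ : Tendsto φ₁ (nhds 0) (nhds (0 : ℂ)) := by
    simpa [hφ₁0] using hc₁.tendsto
  have htend₂ : Tendsto φ₂ (nhds 0) (nhds (0 : ℂ)) := by
    simpa [hφ₂0] using hc₂.tendsto
  have hder₁cont : ContinuousAt (deriv φ₁) 0 := (hφ₁a.deriv 0 h0ball).continuousAt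
  -- φ₁ z = z * h₁ z
  set h₁ : ℂ → ℂ := dslope φ₁ 0 with hh₁
  have hφfac : ∀ z, φ₁ z = z * h₁ z := by
    intro z
    have := sub_smul_dslope φ₁ 0 z
    simp [hφ₁0, smul_eq_mul] at this
    linear_combination -this
  -- the auxiliary continuous function A
  set A : ℂ → ℂ := fun z => h₁ z ^ (k - 1) * g (φ₁ z) * deriv φ₁ z with hA
  have hAcont : ContinuousAt A 0 := by
    apply ContinuousAt.mul
    apply ContinuousAt.mul
    · exact (continuousAt_dslope_same.2 hd₁).pow _
    · exact (by simpa [hφ₁0] using hg.continuousAt : ContinuousAt g (φ₁ 0)).comp hc₁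
    · exact hder₁cont
  have key : A =ᶠ[nhdsWithin (0 : ℂ) {(0 : ℂ)}ᶜ] fun _ => (k : ℂ) := by
    have h1 : ∀ᶠ z in nhds (0 : ℂ), f (φ₁ z) = (φ₁ z) ^ (k - 1) * g (φ₁ z) :=
      htend₁.eventually hfg
    have h2 : ∀ᶠ z in nhds (0 : ℂ), f (φ₁ z) * deriv φ₁ z = (k : ℂ) * z ^ (k - 1) :=
      eventually_of_mem hball_nhds hφ₁eq
    filter_upwards [eventually_nhdsWithin_of_eventually_nhds h1,
      eventually_nhdsWithin_of_eventually_nhds h2, eventually_mem_nhdsWithin] with z e1 e2 hz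
    have hz' : (z : ℂ) ≠ 0 := hz
    have : z ^ (k - 1) * A z = z ^ (k - 1) * k := by
      rw [hA]
      have : φ₁ z ^ (k - 1) = z ^ (k - 1) * h₁ z ^ (k - 1) := by
        rw [hφfac z, mul_pow]
      calc z ^ (k - 1) * (h₁ z ^ (k - 1) * g (φ₁ z) * deriv φ₁ z)
          = (φ₁ z ^ (k - 1) * g (φ₁ z)) * deriv φ₁ z := by rw [this]; ring
        _ = f (φ₁ z) * deriv φ₁ z := by rw [← e1]
        _ = (k : ℂ) * z ^ (k - 1) := e2
        _ = z ^ (k - 1) * k := by ring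
    exact mul_left_cancel₀ (pow_ne_zero _ hz') this
  have hA0 : A 0 = k :=
    tendsto_nhds_unique hAcont.continuousWithinAt (tendsto_const_nhds.congr' key.symm)
  have hder₁0 : deriv φ₁ 0 ≠ 0 := by
    intro h
    have hz : A 0 = 0 := by simp [hA, h]
    rw [hz] at hA0
    exact hkC hA0.symm
  -- local inverse of φ₁
  obtain ⟨p, hp⟩ := hA₁
  have hstrict : HasStrictDerivAt φ₁ (deriv φ₁ 0) 0 := hp.deriv ▸ hp.hasStrictDerivAt
  have hFs := hstrict.hasStrictFDerivAt_equiv hder₁0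
  set e := hFs.toOpenPartialHomeomorph φ₁ with he
  have hcoe : ⇑e = φ₁ := hFs.toOpenPartialHomeomorph_coe
  have h0src : (0 : ℂ) ∈ e.source := hFs.mem_toOpenPartialHomeomorph_source
  have h0tgt : (0 : ℂ) ∈ e.target := by
    have := hFs.image_mem_toOpenPartialHomeomorph_target
    rwa [hφ₁0] at this
  set ψ : ℂ → ℂ := fun z => e.symm (φ₂ z) with hψ
  have hψ0 : ψ 0 = 0 := by
    have := e.left_inv h0src
    rw [hcoe, hφ₁0] at this
    simp [hψ, hφ₂0, this]
  have hsymm_cont : ContinuousAt e.symm 0 := e.continuousAt_symm h0tgt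
  have hψcont : ContinuousAt ψ 0 := by
    exact (by simpa [hφ₂0] using hsymm_cont : ContinuousAt e.symm (φ₂ 0)).comp hc₂
  have hψtend : Tendsto ψ (nhds 0) (nhds (0 : ℂ)) := by
    simpa [hψ0] using hψcont.tendsto
  -- eventual facts
  have hmem_t : ∀ᶠ z in nhds (0 : ℂ), φ₂ z ∈ e.target :=
    htend₂.eventually (e.open_target.eventually_mem h0tgt)
  have hψball : ∀ᶠ z in nhds (0 : ℂ), ψ z ∈ ball (0 : ℂ) ρ' :=
    hψtend.eventually (isOpen_ball.eventually_mem h0ball)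
  have hψder : ∀ᶠ z in nhds (0 : ℂ), deriv φ₁ (ψ z) ≠ 0 :=
    hψtend.eventually (hder₁cont.eventually_ne hder₁0)
  have hretr : ∀ᶠ z in nhds (0 : ℂ), φ₁ (ψ z) = φ₂ z := by
    filter_upwards [hmem_t] with z hz
    have := e.right_inv hz
    rwa [hcoe] at this
  have hψder' : ∀ᶠ z in nhds (0 : ℂ),
      HasDerivAt ψ ((deriv φ₁ (ψ z))⁻¹ * deriv φ₂ z) z := by
    filter_upwards [hmem_t, hψder, hψball, hball_nhds] with z h1 h2 h3 h4
    have hφ₁d : HasDerivAt φ₁ (deriv φ₁ (ψ z)) (ψ z) :=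
      (hφ₁a _ h3).differentiableAt.hasDerivAt
    have hed : HasDerivAt (⇑e) (deriv φ₁ (ψ z)) (e.symm (φ₂ z)) := by
      rw [hcoe]; exact hφ₁d
    have hsd : HasDerivAt e.symm (deriv φ₁ (ψ z))⁻¹ (φ₂ z) :=
      e.hasDerivAt_symm h1 h2 hed
    have hφ₂d : HasDerivAt φ₂ (deriv φ₂ z) z :=
      (hφ₂a _ h4).differentiableAt.hasDerivAt
    exact hsd.comp z hφ₂d
  have hψdiff0 : DifferentiableAt ℂ ψ 0 := hψder'.self_of_nhds.differentiableAt
  -- F = ψ^k - z^k has zero derivative near 0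
  set F : ℂ → ℂ := fun z => ψ z ^ k - z ^ k with hF
  have hFder : ∀ᶠ z in nhds (0 : ℂ), HasDerivAt F 0 z := by
    filter_upwards [hψder', hψball, hψder, hretr, hball_nhds] with z hdz hb hne hr hzb
    have h1 : HasDerivAt (fun z => ψ z ^ k)
        ((k : ℂ) * ψ z ^ (k - 1) * ((deriv φ₁ (ψ z))⁻¹ * deriv φ₂ z)) z := hdz.pow k
    have h2 : HasDerivAt (fun z : ℂ => z ^ k) ((k : ℂ) * z ^ (k - 1)) z := hasDerivAt_pow k z
    have h3 := h1.sub h2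
    have e1 : f (φ₁ (ψ z)) * deriv φ₁ (ψ z) = (k : ℂ) * ψ z ^ (k - 1) := hφ₁eq _ hb
    have e2 : f (φ₂ z) * deriv φ₂ z = (k : ℂ) * z ^ (k - 1) := hφ₂eq _ hzb
    have hval : (k : ℂ) * ψ z ^ (k - 1) * ((deriv φ₁ (ψ z))⁻¹ * deriv φ₂ z)
        - (k : ℂ) * z ^ (k - 1) = 0 := by
      rw [← e1, hr, ← e2]
      field_simp
      ring
    rwa [hval] at h3
  obtain ⟨r, hr0, hrball⟩ := Metric.eventually_nhds_iff_ball.mp hFder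
  have hFconst : ∀ z ∈ ball (0 : ℂ) r, F z = F 0 := by
    intro z hz
    refine (convex_ball (0 : ℂ) r).is_const_of_fderivWithin_eq_zero
      (fun x hx => (hrball x hx).differentiableAt.differentiableWithinAt) ?_ hz
      (mem_ball_self hr0)
    intro x hx
    rw [fderivWithin_of_isOpen isOpen_ball hx]
    have := (hrball x hx).hasFDerivAt.fderiv
    rw [this]
    ext
    simp
  have hψpow : ∀ᶠ z in nhds (0 : ℂ), ψ z ^ k = z ^ k := by
    have hF0 : F 0 = 0 := by simp [hF, hψ0, zero_pow (by omega : k ≠ 0)]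
    filter_upwards [ball_mem_nhds (0 : ℂ) hr0] with z hz
    have := hFconst z hz
    rw [hF0] at this
    exact sub_eq_zero.mp this
  -- ψ z = z * w z with w continuous at 0
  set w : ℂ → ℂ := dslope ψ 0 with hw
  have hψfac : ∀ z, ψ z = z * w z := by
    intro z
    have := sub_smul_dslope ψ 0 z
    simp [hψ0, smul_eq_mul] at this
    linear_combination -this
  have hwcont : ContinuousAt w 0 := continuousAt_dslope_same.2 hψdiff0
  have hwpow : (fun z => w z ^ k) =ᶠ[nhdsWithin (0 : ℂ) {(0 : ℂ)}ᶜ] fun _ => (1 : ℂ) := by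
    filter_upwards [eventually_nhdsWithin_of_eventually_nhds hψpow,
      eventually_mem_nhdsWithin] with z h1 hz
    have hz' : (z : ℂ) ≠ 0 := hz
    have : z ^ k * w z ^ k = z ^ k * 1 := by
      rw [← mul_pow, ← hψfac, h1, mul_one]
    exact mul_left_cancel₀ (pow_ne_zero _ hz') this
  set ζ : ℂ := w 0 with hζ
  have hζk : ζ ^ k = 1 :=
    tendsto_nhds_unique ((hwcont.pow k).continuousWithinAt)
      (tendsto_const_nhds.congr' hwpow.symm)
  have hζ0 : ζ ≠ 0 := fun h => one_ne_zero (by rw [← hζk, h, zero_pow (by omega : k ≠ 0)])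
  -- w = ζ near 0
  set S : ℂ → ℂ := fun z => ∑ i ∈ Finset.range k, w z ^ i * ζ ^ (k - 1 - i) with hS
  have hScont : ContinuousAt S 0 := by
    rw [hS]
    exact tendsto_finset_sum _ fun i _ => ((hwcont.pow i).mul continuousAt_const)
  have hS0 : S 0 = (k : ℂ) * ζ ^ (k - 1) := by
    rw [hS]
    simp only
    rw [Finset.sum_congr rfl (fun i hi => ?_), Finset.sum_const, Finset.card_range,
      nsmul_eq_mul]
    rw [← hζ, ← pow_add]
    congr 1
    have := Finset.mem_range.mp hi
    omega
  have hS0ne : S 0 ≠ 0 := by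
    rw [hS0]
    exact mul_ne_zero hkC (pow_ne_zero _ hζ0)
  have hSne : ∀ᶠ z in nhds (0 : ℂ), S z ≠ 0 := hScont.eventually_ne hS0ne
  have hwζ : ∀ᶠ z in nhdsWithin (0 : ℂ) {(0 : ℂ)}ᶜ, w z = ζ := by
    filter_upwards [hwpow, eventually_nhdsWithin_of_eventually_nhds hSne] with z h1 h2
    have := geom_sum₂_mul (w z) ζ k
    rw [h1, hζk, sub_self] at this
    have : w z - ζ = 0 := by
      rcases mul_eq_zero.mp this with h | h
      · exact absurd h h2
      · exact h
    linear_combination this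
  have hψζ : ∀ᶠ z in nhds (0 : ℂ), ψ z = ζ * z := by
    have := eventually_nhdsWithin_iff.mp hwζ
    filter_upwards [this] with z hz
    rcases eq_or_ne z 0 with rfl | hz0
    · simp [hψ0]
    · rw [hψfac z, hz hz0]; ring
  have hfinal : ∀ᶠ z in nhds (0 : ℂ), φ₂ z = φ₁ (ζ * z) := by
    filter_upwards [hretr, hψζ] with z h1 h2
    rw [← h1, h2]
  obtain ⟨ε, hε0, hεball⟩ := Metric.eventually_nhds_iff_ball.mp hfinal
  exact ⟨ε, hε0, ζ, hζk, hεball⟩
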